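/- Let 1 < p < ∞. The tensor product map B(x,y)(s,t) = x(s)y(t) is bounded from L_{p,∞}[0,1] × L_{p,∞}[0,1] into the Lorentz–Zygmund space L_{p,∞}(log L)^{-1/p}([0,1]²); that is, there is C > 0 with sup_{0<u≤1} (x⊗y)*(u) u^{1/p} ln^{-1/p}(e/u) ≤ C‖x‖_{p,∞}‖y‖_{p,∞}. -/

import Mathlib

open MeasureTheory Set Filter ENNReal

/-- Lebesgue measure restricted to `[0,1]`. -/
noncomputable def muI : Measure ℝ := volume.restrict (Set.Icc (0:ℝ) 1)

/-- Lebesgue measure on the square `[0,1]²`. -/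
noncomputable def muI2 : Measure (ℝ × ℝ) := muI.prod muI

/-- Distribution function `n_f(τ) = μ{w : |f w| > τ}`. -/
noncomputable def distrib {α : Type*} [MeasurableSpace α] (μ : Measure α) (f : α → ℝ)
    (τ : ℝ) : ℝ≥0∞ :=
  μ {w | τ < |f w|}

/-- Non-increasing rearrangement of `f` with respect to `μ`. -/
noncomputable def rearr {α : Type*} [MeasurableSpace α] (μ : Measure α) (f : α → ℝ)
    (t : ℝ) : ℝ :=
  sInf {τ : ℝ | 0 ≤ τ ∧ distrib μ f τ ≤ ENNReal.ofReal t}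

/-- Tensor product `(x ⊗ y)(s,t) = x s * y t`. -/
def tensor (x y : ℝ → ℝ) : ℝ × ℝ → ℝ := fun p => x p.1 * y p.2

/-- Dilation operator `σ_t x (u) = x(u/t) χ_{[0,1]}(u/t)`. -/
noncomputable def dil (t : ℝ) (x : ℝ → ℝ) : ℝ → ℝ :=
  fun u => x (u / t) * (Set.Icc (0:ℝ) 1).indicator (fun _ => (1:ℝ)) (u / t)

/-! ### Auxiliary lemmas -/

lemma muI_univ : muI Set.univ = 1 := by
  simp [muI, Real.volume_Icc]

lemma muI_le_one (s : Set ℝ) : muI s ≤ 1 := by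
  rw [← muI_univ]; exact measure_mono (subset_univ s)

instance : IsFiniteMeasure muI := ⟨by rw [muI_univ]; exact one_lt_top⟩

instance : SFinite muI := by unfold muI; infer_instance

lemma distrib_anti {α : Type*} [MeasurableSpace α] (μ : Measure α) (f : α → ℝ)
    {σ τ : ℝ} (h : σ ≤ τ) : distrib μ f τ ≤ distrib μ f σ :=
  measure_mono fun w hw => lt_of_le_of_lt h hw

lemma distrib_set_nonempty {α : Type*} [MeasurableSpace α] (μ : Measure α)
    [IsFiniteMeasure μ] (f : α → ℝ) (hf : Measurable f) {t : ℝ} (ht : 0 < t) :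
    {τ : ℝ | 0 ≤ τ ∧ distrib μ f τ ≤ ENNReal.ofReal t}.Nonempty := by
  have hmeas : ∀ n : ℕ, NullMeasurableSet {w | (n:ℝ) < |f w|} μ := by
    intro n
    exact (measurableSet_lt measurable_const hf.abs).nullMeasurableSet
  have hanti : Antitone fun n : ℕ => {w | (n:ℝ) < |f w|} := by
    intro m n hmn w hw
    simp only [mem_setOf_eq] at hw ⊢
    exact lt_of_le_of_lt (Nat.cast_le.2 hmn) hw
  have hint : (⋂ n : ℕ, {w | (n:ℝ) < |f w|}) = ∅ := by
    ext w
    simp only [mem_iInter, mem_setOf_eq, mem_empty_iff_false, iff_false, not_forall, not_lt]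
    obtain ⟨n, hn⟩ := exists_nat_gt |f w|
    exact ⟨n, hn.le⟩
  have htend : Tendsto (fun n : ℕ => μ {w | (n:ℝ) < |f w|}) atTop (nhds 0) := by
    have := tendsto_measure_iInter_atTop hmeas hanti ⟨0, measure_ne_top μ _⟩
    rwa [hint, measure_empty] at this
  have hpos : (0:ℝ≥0∞) < ENNReal.ofReal t := ENNReal.ofReal_pos.2 ht
  obtain ⟨n, hn⟩ := (htend.eventually_le_const hpos).exists
  exact ⟨n, Nat.cast_nonneg n, hn⟩

lemma rearr_nonneg {α : Type*} [MeasurableSpace α] (μ : Measure α) (f : α → ℝ) (t : ℝ) :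
    0 ≤ rearr μ f t :=
  Real.sInf_nonneg fun _ h => h.1

lemma rearr_le {α : Type*} [MeasurableSpace α] (μ : Measure α) (f : α → ℝ) {t τ : ℝ}
    (h0 : 0 ≤ τ) (h : distrib μ f τ ≤ ENNReal.ofReal t) : rearr μ f t ≤ τ :=
  csInf_le ⟨0, fun _ hy => hy.1⟩ ⟨h0, h⟩

lemma distrib_le_of_rearr_lt {α : Type*} [MeasurableSpace α] (μ : Measure α) (f : α → ℝ)
    {t σ : ℝ} (hne : {τ : ℝ | 0 ≤ τ ∧ distrib μ f τ ≤ ENNReal.ofReal t}.Nonempty)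
    (h : rearr μ f t < σ) : distrib μ f σ ≤ ENNReal.ofReal t := by
  obtain ⟨τ, hτ, hτσ⟩ := (csInf_lt_iff ⟨0, fun _ hy => hy.1⟩ hne).1 h
  exact le_trans (distrib_anti μ f hτσ.le) hτ.2

lemma distrib_le_of_weak {p N : ℝ} (hp : 1 < p) (hN : 0 ≤ N) {x : ℝ → ℝ}
    (hx : Measurable x) (hb : ∀ t ∈ Set.Ioc (0:ℝ) 1, rearr muI x t * t ^ (1/p) ≤ N)
    {σ : ℝ} (hσ : 0 < σ) :
    distrib muI x σ ≤ min 1 (ENNReal.ofReal ((N/σ) ^ p)) := by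
  have hp0 : (0:ℝ) < p := lt_trans one_pos hp
  have hr0 : 0 ≤ (N/σ) ^ p := Real.rpow_nonneg (div_nonneg hN hσ.le) p
  have key : ∀ t : ℝ, (N/σ) ^ p < t → t ≤ 1 → distrib muI x σ ≤ ENNReal.ofReal t := by
    intro t hrt ht1
    have ht0 : 0 < t := lt_of_le_of_lt hr0 hrt
    have htp : (0:ℝ) < t ^ (1/p) := Real.rpow_pos_of_pos ht0 _
    have hre : rearr muI x t ≤ N / t ^ (1/p) := by
      rw [le_div_iff₀ htp]
      exact hb t ⟨ht0, ht1⟩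
    have hlt : N / t ^ (1/p) < σ := by
      rw [div_lt_iff₀ htp]
      have h1 : N / σ < t ^ (1/p) := by
        have := Real.rpow_lt_rpow hr0 hrt (by positivity : (0:ℝ) < 1/p)
        rwa [← Real.rpow_mul (div_nonneg hN hσ.le), mul_one_div,
          div_self (ne_of_gt hp0), Real.rpow_one] at this
      calc N = (N / σ) * σ := by field_simp
        _ < t ^ (1/p) * σ := by exact mul_lt_mul_of_pos_right h1 hσ
        _ = σ * t ^ (1/p) := mul_comm _ _
    exact distrib_le_of_rearr_lt muI x (distrib_set_nonempty muI x hx ht0)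
      (lt_of_le_of_lt hre hlt)
  rcases le_or_gt 1 ((N/σ) ^ p) with h1 | h1
  · have : min (1:ℝ≥0∞) (ENNReal.ofReal ((N/σ) ^ p)) = 1 := by
      rw [min_eq_left]
      exact le_trans (by norm_num) (ENNReal.ofReal_le_ofReal h1)
    rw [this]; exact muI_le_one _
  · refine le_min (muI_le_one _) ?_
    by_contra hcon
    push_neg at hcon
    obtain ⟨t', ht'0, h1', h2'⟩ := ENNReal.lt_iff_exists_real_btwn.1 hcon
    have hrt' : (N/σ) ^ p < t' := by
      rwa [ENNReal.ofReal_lt_ofReal_iff_of_nonneg hr0] at h1'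
    have := key (min t' 1) (lt_min hrt' h1) (min_le_right _ _)
    exact absurd (lt_of_le_of_lt (le_trans this
      (ENNReal.ofReal_le_ofReal (min_le_left _ _))) h2') (lt_irrefl _)

lemma lint_min_bound {p N c : ℝ} (hp : 1 < p) (hN : 0 < N) (hc : 0 < c) {x : ℝ → ℝ}
    (hx : Measurable x)
    (hdist : ∀ σ : ℝ, 0 < σ → distrib muI x σ ≤ min 1 (ENNReal.ofReal ((N/σ) ^ p)))
    (ha1 : (N*c) ^ p ≤ 1) :
    ∫⁻ s, min 1 (ENNReal.ofReal ((c * |x s|) ^ p)) ∂muI ≤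
      ENNReal.ofReal ((N*c) ^ p * (1 + Real.log (1/(N*c) ^ p))) := by
  have hp0 : (0:ℝ) < p := lt_trans one_pos hp
  set a : ℝ := (N*c) ^ p with ha_def
  have ha0 : 0 < a := Real.rpow_pos_of_pos (by positivity) p
  set g : ℝ → ℝ := fun s => min 1 ((c * |x s|) ^ p) with hg_def
  have hgm : Measurable g :=
    measurable_const.min ((Real.continuous_rpow_const hp0.le).measurable.comp
      (hx.abs.const_mul c))
  have hgnn : ∀ s, 0 ≤ g s := fun s =>
    le_min one_pos.le (Real.rpow_nonneg (by positivity) p)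
  have h1 : ∀ s, min 1 (ENNReal.ofReal ((c * |x s|) ^ p)) = ENNReal.ofReal (g s) := by
    intro s
    rcases le_total (1:ℝ) ((c * |x s|) ^ p) with h | h
    · have h' : (1:ℝ≥0∞) ≤ ENNReal.ofReal ((c * |x s|) ^ p) := by
        rw [← ENNReal.ofReal_one]; exact ENNReal.ofReal_le_ofReal h
      rw [min_eq_left h', hg_def]; simp only []
      rw [min_eq_left h, ENNReal.ofReal_one]
    · have h' : ENNReal.ofReal ((c * |x s|) ^ p) ≤ 1 := by
        rw [← ENNReal.ofReal_one]; exact ENNReal.ofReal_le_ofReal h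
      rw [min_eq_right h', hg_def]; simp only []
      rw [min_eq_right h]
  calc ∫⁻ s, min 1 (ENNReal.ofReal ((c * |x s|) ^ p)) ∂muI
      = ∫⁻ s, ENNReal.ofReal (g s) ∂muI := by simp_rw [h1]
    _ = ∫⁻ t in Ioi (0:ℝ), muI {s | t < g s} := by
        exact lintegral_eq_lintegral_meas_lt muI (Eventually.of_forall hgnn) hgm.aemeasurable
    _ ≤ ENNReal.ofReal (a * (1 + Real.log (1/a))) := by
        set F : ℝ → ℝ≥0∞ := fun t => muI {s | t < g s} with hF_def
        have hsplit1 : Ioi (0:ℝ) = Ioc 0 1 ∪ Ioi 1 := (Ioc_union_Ioi_eq_Ioi zero_le_one).symm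
        have hsplit2 : Ioc (0:ℝ) 1 = Ioc 0 a ∪ Ioc a 1 := (Ioc_union_Ioc_eq_Ioc ha0.le ha1).symm
        have hdis1 : Disjoint (Ioc (0:ℝ) 1) (Ioi 1) := by
          apply Set.disjoint_left.2
          intro t ht ht'
          exact absurd ht.2 (not_le.2 ht')
        have hdis2 : Disjoint (Ioc (0:ℝ) a) (Ioc a 1) := by
          apply Set.disjoint_left.2
          intro t ht ht'
          exact absurd ht.2 (not_le.2 ht'.1)
        have h3 : ∫⁻ t in Ioi (1:ℝ), F t = 0 := by
          have hz : Set.EqOn F (fun _ => (0:ℝ≥0∞)) (Ioi (1:ℝ)) := by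
            intro t ht
            have : {s | t < g s} = ∅ := by
              ext s
              simp only [mem_setOf_eq, mem_empty_iff_false, iff_false, not_lt]
              exact le_trans (min_le_left _ _) (le_of_lt ht)
            simp only [hF_def, this, measure_empty]
          rw [setLIntegral_congr_fun measurableSet_Ioi hz, lintegral_zero]
        have hA : ∫⁻ t in Ioc (0:ℝ) a, F t ≤ ENNReal.ofReal a := by
          calc ∫⁻ t in Ioc (0:ℝ) a, F t ≤ ∫⁻ _ in Ioc (0:ℝ) a, 1 :=
                setLIntegral_mono' measurableSet_Ioc fun t _ => muI_le_one _
            _ = ENNReal.ofReal a := by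
                rw [setLIntegral_const, one_mul, Real.volume_Ioc, sub_zero]
        have hB : ∫⁻ t in Ioc a 1, F t ≤ ENNReal.ofReal (a * Real.log (1/a)) := by
          have hpt : ∀ t ∈ Ioc a (1:ℝ), F t ≤ ENNReal.ofReal (a / t) := by
            intro t ht
            have ht0 : 0 < t := lt_trans ha0 ht.1
            have htp : (0:ℝ) < t ^ (1/p) := Real.rpow_pos_of_pos ht0 _
            have hsub : {s | t < g s} ⊆ {s | t ^ (1/p) / c < |x s|} := by
              intro s hs
              simp only [mem_setOf_eq] at hs ⊢
              have hs' : t < (c * |x s|) ^ p := lt_of_lt_of_le hs (min_le_right _ _)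
              have h2 : t ^ (1/p) < ((c * |x s|) ^ p) ^ (1/p) :=
                Real.rpow_lt_rpow ht0.le hs' (by positivity)
              rw [← Real.rpow_mul (by positivity), mul_one_div, div_self (ne_of_gt hp0),
                Real.rpow_one] at h2
              rw [div_lt_iff₀ hc]
              linarith
            have heq : (N / (t ^ (1/p) / c)) ^ p = a / t := by
              rw [div_div_eq_mul_div, Real.div_rpow (by positivity) htp.le]
              congr 1
              rw [← Real.rpow_mul ht0.le, one_div_mul_cancel (ne_of_gt hp0), Real.rpow_one]
            calc F t ≤ muI {s | t ^ (1/p) / c < |x s|} := measure_mono hsub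
              _ = distrib muI x (t ^ (1/p) / c) := rfl
              _ ≤ min 1 (ENNReal.ofReal ((N / (t ^ (1/p) / c)) ^ p)) :=
                  hdist _ (by positivity)
              _ ≤ ENNReal.ofReal ((N / (t ^ (1/p) / c)) ^ p) := min_le_right _ _
              _ = ENNReal.ofReal (a / t) := by rw [heq]
          have hint : IntegrableOn (fun t => a / t) (Ioc a 1) volume := by
            have hcont : ContinuousOn (fun t => a / t) (Icc a 1) :=
              ContinuousOn.div continuousOn_const continuousOn_id
                (fun t ht => ne_of_gt (lt_of_lt_of_le ha0 ht.1))
            exact (hcont.integrableOn_Icc).mono_set Ioc_subset_Icc_self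
          have hnn : 0 ≤ᵐ[volume.restrict (Ioc a (1:ℝ))] fun t => a / t := by
            refine (ae_restrict_iff' measurableSet_Ioc).2 (Eventually.of_forall fun t ht =>
              div_nonneg ha0.le (lt_trans ha0 ht.1).le)
          have hval : ∫ t in Ioc a (1:ℝ), a / t = a * Real.log (1/a) := by
            have h0 : (0:ℝ) ∉ Set.uIcc a 1 := by
              rw [Set.uIcc_of_le ha1]
              intro h
              exact absurd h.1 (not_le.2 ha0)
            rw [← intervalIntegral.integral_of_le ha1]
            simp_rw [div_eq_mul_inv]
            rw [intervalIntegral.integral_const_mul, integral_inv h0, one_mul, one_div]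
          calc ∫⁻ t in Ioc a 1, F t ≤ ∫⁻ t in Ioc a 1, ENNReal.ofReal (a / t) :=
                setLIntegral_mono' measurableSet_Ioc hpt
            _ = ENNReal.ofReal (∫ t in Ioc a (1:ℝ), a / t) :=
                (ofReal_integral_eq_lintegral_ofReal hint hnn).symm
            _ = ENNReal.ofReal (a * Real.log (1/a)) := by rw [hval]
        calc ∫⁻ t in Ioi (0:ℝ), F t
            = (∫⁻ t in Ioc (0:ℝ) a, F t) + (∫⁻ t in Ioc a 1, F t) + ∫⁻ t in Ioi (1:ℝ), F t := by
              rw [hsplit1, lintegral_union measurableSet_Ioi hdis1, hsplit2,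
                lintegral_union measurableSet_Ioc hdis2]
          _ ≤ ENNReal.ofReal a + ENNReal.ofReal (a * Real.log (1/a)) := by
              rw [h3, add_zero]
              exact add_le_add hA hB
          _ = ENNReal.ofReal (a * (1 + Real.log (1/a))) := by
              rw [← ENNReal.ofReal_add ha0.le
                (mul_nonneg ha0.le (Real.log_nonneg (by rw [le_div_iff₀ ha0]; linarith)))]
              congr 1
              ring

lemma distrib_tensor_le {p N M τ : ℝ} (hp : 1 < p) (hN : 0 < N) (hM : 0 < M) (hτ : 0 < τ)
    {x y : ℝ → ℝ} (hx : Measurable x) (hy : Measurable y)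
    (hdx : ∀ σ : ℝ, 0 < σ → distrib muI x σ ≤ min 1 (ENNReal.ofReal ((N/σ) ^ p)))
    (hdy : ∀ σ : ℝ, 0 < σ → distrib muI y σ ≤ min 1 (ENNReal.ofReal ((M/σ) ^ p)))
    (ha1 : (N*(M/τ)) ^ p ≤ 1) :
    distrib muI2 (tensor x y) τ ≤
      ENNReal.ofReal ((N*(M/τ)) ^ p * (1 + Real.log (1/(N*(M/τ)) ^ p))) := by
  have hτM : 0 < M / τ := div_pos hM hτ
  have hS : MeasurableSet {w : ℝ × ℝ | τ < |x w.1 * y w.2|} :=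
    measurableSet_lt measurable_const ((hx.comp measurable_fst).mul (hy.comp measurable_snd)).abs
  have key : distrib muI2 (tensor x y) τ ≤
      ∫⁻ s, min 1 (ENNReal.ofReal ((M/τ * |x s|) ^ p)) ∂muI := by
    have heq : distrib muI2 (tensor x y) τ = muI2 {w : ℝ × ℝ | τ < |x w.1 * y w.2|} := rfl
    rw [heq, muI2, Measure.prod_apply hS]
    refine lintegral_mono fun s => ?_
    rcases eq_or_ne (x s) 0 with hxs | hxs
    · have : (Prod.mk s ⁻¹' {w : ℝ × ℝ | τ < |x w.1 * y w.2|}) = ∅ := by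
        ext t
        simp [hxs, not_lt, hτ.le]
      rw [this, measure_empty]
      exact zero_le
    · have habs : 0 < |x s| := abs_pos.2 hxs
      have hset : (Prod.mk s ⁻¹' {w : ℝ × ℝ | τ < |x w.1 * y w.2|}) =
          {t | τ / |x s| < |y t|} := by
        ext t
        simp only [mem_preimage, mem_setOf_eq, abs_mul]
        rw [div_lt_iff₀ habs, mul_comm]
      rw [hset]
      have := hdy (τ / |x s|) (div_pos hτ habs)
      have harg : M / (τ / |x s|) = M/τ * |x s| := by
        field_simp
      calc muI {t | τ / |x s| < |y t|} = distrib muI y (τ / |x s|) := rfl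
        _ ≤ min 1 (ENNReal.ofReal ((M / (τ / |x s|)) ^ p)) := this
        _ = min 1 (ENNReal.ofReal ((M/τ * |x s|) ^ p)) := by rw [harg]
  exact le_trans key (lint_min_bound hp hN hτM hx hdx ha1)

lemma null_of_rearr_zero {y : ℝ → ℝ} (hy : Measurable y)
    (h0 : ∀ t ∈ Set.Ioc (0:ℝ) 1, rearr muI y t = 0) : muI {t | y t ≠ 0} = 0 := by
  have hσ : ∀ σ : ℝ, 0 < σ → distrib muI y σ = 0 := by
    intro σ hσ0
    have hk : ∀ k : ℕ, distrib muI y σ ≤ ENNReal.ofReal (1/(k+1)) := by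
      intro k
      have hk0 : (0:ℝ) < 1/(k+1) := by positivity
      have hk1 : (1:ℝ)/(k+1) ≤ 1 := by
        rw [div_le_one (by positivity)]
        linarith [Nat.cast_nonneg (α := ℝ) k]
      have hne := distrib_set_nonempty muI y hy hk0
      have := h0 (1/(k+1)) ⟨hk0, hk1⟩
      exact distrib_le_of_rearr_lt muI y hne (by rw [this]; exact hσ0)
    have htend : Tendsto (fun k : ℕ => ENNReal.ofReal (1/(k+1))) atTop (nhds 0) := by
      rw [← ENNReal.ofReal_zero]
      exact ENNReal.tendsto_ofReal tendsto_one_div_add_atTop_nhds_zero_nat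
    have := ge_of_tendsto htend (Eventually.of_forall fun k => hk k)
    exact le_antisymm this (zero_le)
  have hun : {t | y t ≠ 0} = ⋃ n : ℕ, {t | 1/(n+1:ℝ) < |y t|} := by
    ext t
    simp only [mem_setOf_eq, mem_iUnion]
    constructor
    · intro h
      obtain ⟨n, hn⟩ := exists_nat_one_div_lt (abs_pos.2 h)
      exact ⟨n, hn⟩
    · rintro ⟨n, hn⟩
      intro h
      rw [h, abs_zero] at hn
      exact absurd hn (not_lt.2 (by positivity))
  rw [hun]
  exact measure_iUnion_null fun n => hσ _ (by positivity)

lemma tensor_rearr_zero_right {x y : ℝ → ℝ} (hnull : muI {t | y t ≠ 0} = 0) {u : ℝ}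
    (hu : 0 ≤ u) : rearr muI2 (tensor x y) u = 0 := by
  have hd : distrib muI2 (tensor x y) 0 = 0 := by
    refine le_antisymm ?_ (zero_le)
    have hsub : {w : ℝ × ℝ | 0 < |tensor x y w|} ⊆ Set.univ ×ˢ {t | y t ≠ 0} := by
      intro w hw
      simp only [mem_setOf_eq, tensor] at hw
      refine ⟨trivial, fun h => ?_⟩
      rw [h, mul_zero, abs_zero] at hw
      exact lt_irrefl 0 hw
    calc distrib muI2 (tensor x y) 0 ≤ muI2 (Set.univ ×ˢ {t | y t ≠ 0}) := measure_mono hsub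
      _ = muI Set.univ * muI {t | y t ≠ 0} := by rw [muI2, Measure.prod_prod]
      _ = 0 := by rw [hnull, mul_zero]
  refine le_antisymm (rearr_le _ _ le_rfl (by rw [hd]; exact zero_le)) (rearr_nonneg _ _ _)

lemma tensor_rearr_zero_left {x y : ℝ → ℝ} (hnull : muI {s | x s ≠ 0} = 0) {u : ℝ}
    (hu : 0 ≤ u) : rearr muI2 (tensor x y) u = 0 := by
  have hd : distrib muI2 (tensor x y) 0 = 0 := by
    refine le_antisymm ?_ (zero_le)
    have hsub : {w : ℝ × ℝ | 0 < |tensor x y w|} ⊆ {s | x s ≠ 0} ×ˢ Set.univ := by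
      intro w hw
      simp only [mem_setOf_eq, tensor] at hw
      refine ⟨fun h => ?_, trivial⟩
      rw [h, zero_mul, abs_zero] at hw
      exact lt_irrefl 0 hw
    calc distrib muI2 (tensor x y) 0 ≤ muI2 ({s | x s ≠ 0} ×ˢ Set.univ) := measure_mono hsub
      _ = muI {s | x s ≠ 0} * muI Set.univ := by rw [muI2, Measure.prod_prod]
      _ = 0 := by rw [hnull, zero_mul]
  refine le_antisymm (rearr_le _ _ le_rfl (by rw [hd]; exact zero_le)) (rearr_nonneg _ _ _)

theorem tensor_bounded_weakLp_LorentzZygmund (p : ℝ) (hp : 1 < p) :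
    ∃ C : ℝ, 0 < C ∧ ∀ x y : ℝ → ℝ, Measurable x → Measurable y →
      (⨆ u ∈ Set.Ioc (0:ℝ) 1, ENNReal.ofReal
        (rearr muI2 (tensor x y) u * u ^ (1/p) * Real.log (Real.exp 1 / u) ^ (-(1/p)))) ≤
      ENNReal.ofReal C *
        (⨆ t ∈ Set.Ioc (0:ℝ) 1, ENNReal.ofReal (rearr muI x t * t ^ (1/p))) *
        (⨆ t ∈ Set.Ioc (0:ℝ) 1, ENNReal.ofReal (rearr muI y t * t ^ (1/p))) := by
  have hp0 : (0:ℝ) < p := lt_trans one_pos hp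
  refine ⟨10, by norm_num, fun x y hx hy => ?_⟩
  set SX := ⨆ t ∈ Set.Ioc (0:ℝ) 1, ENNReal.ofReal (rearr muI x t * t ^ (1/p)) with hSX_def
  set SY := ⨆ t ∈ Set.Ioc (0:ℝ) 1, ENNReal.ofReal (rearr muI y t * t ^ (1/p)) with hSY_def
  -- helper : a zero supremum forces the rearrangement to vanish
  have hzero_aux : ∀ z : ℝ → ℝ,
      (⨆ t ∈ Set.Ioc (0:ℝ) 1, ENNReal.ofReal (rearr muI z t * t ^ (1/p))) = 0 →
      ∀ t ∈ Set.Ioc (0:ℝ) 1, rearr muI z t = 0 := by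
    intro z hz t ht
    have hle : ENNReal.ofReal (rearr muI z t * t ^ (1/p)) ≤ 0 := by
      rw [← hz]
      exact le_iSup₂ (f := fun t _ => ENNReal.ofReal (rearr muI z t * t ^ (1/p))) t ht
    have h1 : rearr muI z t * t ^ (1/p) ≤ 0 := by
      by_contra hcon
      push_neg at hcon
      exact absurd (lt_of_lt_of_le (ENNReal.ofReal_pos.2 hcon) hle) (lt_irrefl _)
    have htp : (0:ℝ) < t ^ (1/p) := Real.rpow_pos_of_pos ht.1 _
    have := rearr_nonneg muI z t
    nlinarith
  rcases eq_or_ne SX 0 with hSX0 | hSX0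
  · refine le_trans (iSup₂_le fun u hu => ?_) (zero_le)
    have hnull := null_of_rearr_zero hx (hzero_aux x hSX0)
    rw [tensor_rearr_zero_left hnull hu.1.le, zero_mul, zero_mul, ENNReal.ofReal_zero]
  rcases eq_or_ne SY 0 with hSY0 | hSY0
  · refine le_trans (iSup₂_le fun u hu => ?_) (zero_le)
    have hnull := null_of_rearr_zero hy (hzero_aux y hSY0)
    rw [tensor_rearr_zero_right hnull hu.1.le, zero_mul, zero_mul, ENNReal.ofReal_zero]
  rcases eq_or_ne SX ⊤ with hSXt | hSXt
  · have : ENNReal.ofReal 10 * SX * SY = ⊤ := by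
      rw [hSXt, ENNReal.mul_top (by simp), ENNReal.top_mul hSY0]
    rw [this]
    exact le_top
  rcases eq_or_ne SY ⊤ with hSYt | hSYt
  · have : ENNReal.ofReal 10 * SX * SY = ⊤ := by
      rw [hSYt, ENNReal.mul_top (mul_ne_zero (ENNReal.ofReal_pos.2 (by norm_num)).ne' hSX0)]
    rw [this]
    exact le_top
  -- main case
  set N := SX.toReal with hN_def
  set M := SY.toReal with hM_def
  have hN : 0 < N := ENNReal.toReal_pos hSX0 hSXt
  have hM : 0 < M := ENNReal.toReal_pos hSY0 hSYt
  have hofN : ENNReal.ofReal N = SX := ENNReal.ofReal_toReal hSXt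
  have hofM : ENNReal.ofReal M = SY := ENNReal.ofReal_toReal hSYt
  have hbx : ∀ t ∈ Set.Ioc (0:ℝ) 1, rearr muI x t * t ^ (1/p) ≤ N := by
    intro t ht
    have h1 : ENNReal.ofReal (rearr muI x t * t ^ (1/p)) ≤ SX :=
      le_iSup₂ (f := fun t _ => ENNReal.ofReal (rearr muI x t * t ^ (1/p))) t ht
    rw [← hofN] at h1
    exact (ENNReal.ofReal_le_ofReal_iff hN.le).1 h1
  have hby : ∀ t ∈ Set.Ioc (0:ℝ) 1, rearr muI y t * t ^ (1/p) ≤ M := by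
    intro t ht
    have h1 : ENNReal.ofReal (rearr muI y t * t ^ (1/p)) ≤ SY :=
      le_iSup₂ (f := fun t _ => ENNReal.ofReal (rearr muI y t * t ^ (1/p))) t ht
    rw [← hofM] at h1
    exact (ENNReal.ofReal_le_ofReal_iff hM.le).1 h1
  have hdx : ∀ σ : ℝ, 0 < σ → distrib muI x σ ≤ min 1 (ENNReal.ofReal ((N/σ) ^ p)) :=
    fun σ hσ => distrib_le_of_weak hp hN.le hx hbx hσ
  have hdy : ∀ σ : ℝ, 0 < σ → distrib muI y σ ≤ min 1 (ENNReal.ofReal ((M/σ) ^ p)) :=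
    fun σ hσ => distrib_le_of_weak hp hM.le hy hby hσ
  have hRHS : ENNReal.ofReal 10 * SX * SY = ENNReal.ofReal (10 * (N * M)) := by
    rw [← hofN, ← hofM, ← ENNReal.ofReal_mul (by norm_num), ← ENNReal.ofReal_mul
      (by positivity), mul_assoc]
  rw [hRHS]
  refine iSup₂_le fun u hu => ?_
  obtain ⟨hu0, hu1⟩ := hu
  set L := Real.log (Real.exp 1 / u) with hL_def
  have hL : L = 1 - Real.log u := by
    rw [hL_def, Real.log_div (Real.exp_ne_zero 1) (ne_of_gt hu0), Real.log_exp]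
  have hL1 : 1 ≤ L := by
    have := Real.log_nonpos hu0.le hu1
    rw [hL]; linarith
  have hL0 : 0 < L := lt_of_lt_of_le one_pos hL1
  set τ := N * M * (10 * L / u) ^ (1/p) with hτ_def
  have hz0 : (0:ℝ) < (10 * L / u) ^ (1/p) := Real.rpow_pos_of_pos (by positivity) _
  have hτ0 : 0 < τ := by positivity
  have ha : (N * (M / τ)) ^ p = u / (10 * L) := by
    have h1 : N * (M / τ) = (u / (10 * L)) ^ (1/p) := by
      rw [hτ_def]
      rw [show N * (M / (N * M * (10 * L / u) ^ (1/p))) = ((10 * L / u) ^ (1/p))⁻¹ by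
        field_simp]
      rw [← Real.inv_rpow (by positivity), inv_div]
    rw [h1, ← Real.rpow_mul (by positivity), one_div_mul_cancel (ne_of_gt hp0), Real.rpow_one]
  have ha1 : (N * (M / τ)) ^ p ≤ 1 := by
    rw [ha, div_le_one (by positivity)]
    nlinarith
  have harith : u / (10 * L) * (1 + Real.log (1 / (u / (10 * L)))) ≤ u := by
    have h1 : 1 / (u / (10 * L)) = 10 * L / u := one_div_div _ _
    have h2 : Real.log (10 * L / u) = Real.log 10 + Real.log L - Real.log u := by
      rw [Real.log_div (by positivity) (ne_of_gt hu0), Real.log_mul (by norm_num)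
        (ne_of_gt hL0)]
    have h3 : Real.log 10 ≤ 9 := by
      have := Real.log_le_sub_one_of_pos (show (0:ℝ) < 10 by norm_num)
      linarith
    have h4 : Real.log L ≤ L - 1 := Real.log_le_sub_one_of_pos hL0
    have h5 : -Real.log u = L - 1 := by rw [hL]; ring
    have h6 : 1 + Real.log (1 / (u / (10 * L))) ≤ 10 * L := by
      rw [h1, h2]
      nlinarith
    have h7 : 0 ≤ 1 + Real.log (1 / (u / (10 * L))) := by
      rw [h1, h2]
      have hA := Real.log_nonneg (show (1:ℝ) ≤ 10 by norm_num)
      have hB := Real.log_nonneg hL1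
      linarith
    calc u / (10 * L) * (1 + Real.log (1 / (u / (10 * L))))
        ≤ u / (10 * L) * (10 * L) := by
          refine mul_le_mul_of_nonneg_left h6 (by positivity)
      _ = u := by field_simp
  have hdistr : distrib muI2 (tensor x y) τ ≤ ENNReal.ofReal u := by
    refine le_trans (distrib_tensor_le hp hN hM hτ0 hx hy hdx hdy ha1) ?_
    refine ENNReal.ofReal_le_ofReal ?_
    rw [ha]
    exact harith
  have hre : rearr muI2 (tensor x y) u ≤ τ := rearr_le _ _ hτ0.le hdistr
  have hval : τ * u ^ (1/p) * L ^ (-(1/p)) = N * M * 10 ^ (1/p) := by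
    have h1 : τ * u ^ (1/p) = N * M * (10 * L) ^ (1/p) := by
      rw [hτ_def, mul_assoc, ← Real.mul_rpow (by positivity) hu0.le,
        div_mul_cancel₀ _ (ne_of_gt hu0)]
    have h2 : L ^ (1/p) * L ^ (-(1/p)) = 1 := by
      rw [← Real.rpow_add hL0, add_neg_cancel, Real.rpow_zero]
    rw [h1, Real.mul_rpow (by norm_num) hL0.le]
    calc N * M * (10 ^ (1/p) * L ^ (1/p)) * L ^ (-(1/p))
        = N * M * 10 ^ (1/p) * (L ^ (1/p) * L ^ (-(1/p))) := by ring
      _ = N * M * 10 ^ (1/p) := by rw [h2, mul_one]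
  have hfin : rearr muI2 (tensor x y) u * u ^ (1/p) * L ^ (-(1/p)) ≤ 10 * (N * M) := by
    have hup : (0:ℝ) < u ^ (1/p) := Real.rpow_pos_of_pos hu0 _
    have hLp : (0:ℝ) < L ^ (-(1/p)) := Real.rpow_pos_of_pos hL0 _
    have h1 : rearr muI2 (tensor x y) u * u ^ (1/p) * L ^ (-(1/p)) ≤
        τ * u ^ (1/p) * L ^ (-(1/p)) := by
      refine mul_le_mul_of_nonneg_right (mul_le_mul_of_nonneg_right hre hup.le) hLp.le
    rw [hval] at h1
    have h10 : (10:ℝ) ^ (1/p) ≤ 10 := by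
      have h2 : (1:ℝ)/p ≤ 1 := by
        rw [div_le_one hp0]
        linarith
      calc (10:ℝ) ^ (1/p) ≤ 10 ^ (1:ℝ) :=
            Real.rpow_le_rpow_of_exponent_le (by norm_num) h2
        _ = 10 := Real.rpow_one 10
    nlinarith
  exact le_trans (ENNReal.ofReal_le_ofReal hfin) le_rfl
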